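/- For invertible holomorphic functions f, g with local branches log_i f of the logarithm of f, let ω_i = log_i f · dg/g and σ_i = −π₁(log_i f)·log|g|. Then π₁(ω_i) + dσ_i = −r₂(f,g), where r₂(f,g) = π₁(d log f)·log|g| − log|f|·π₁(d log g). -/

import Mathlib

noncomputable section

/-- Real-part projection `π₀(z) = (z + z̄)/2`. -/
def pi0 (w : ℂ) : ℂ := (w + (starRingEnd ℂ) w) / 2

/-- Imaginary-part projection `π₁(z) = (z - z̄)/2`. -/
def pi1 (w : ℂ) : ℂ := (w - (starRingEnd ℂ) w) / 2

private lemma logAbsHasFDeriv (g : ℂ → ℂ) (u : ℂ) (hg0 : g u ≠ 0)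
    (hgd : DifferentiableAt ℂ g u) :
    HasFDerivAt (fun w => Real.log (‖g w‖))
      (Complex.reCLM.comp
        ((ContinuousLinearMap.smulRight (1 : ℂ →L[ℂ] ℂ) (deriv g u / g u)).restrictScalars ℝ)) u := by
  have hq : HasDerivAt (fun w => g w / g u) (deriv g u / g u) u := by
    simpa [div_eq_mul_inv] using (hgd.hasDerivAt.mul_const (g u)⁻¹)
  have hlog : HasDerivAt (fun w => Complex.log (g w / g u)) (deriv g u / g u) u := by
    have := (Complex.hasDerivAt_log
      (by simp [div_self hg0] : g u / g u ∈ Complex.slitPlane)).comp u hq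
    rw [div_self hg0, inv_one, one_mul] at this
    exact this
  have hre : HasFDerivAt
      (fun w => (Complex.log (g w / g u)).re + Real.log (‖g u‖))
      (Complex.reCLM.comp
        ((ContinuousLinearMap.smulRight (1 : ℂ →L[ℂ] ℂ) (deriv g u / g u)).restrictScalars ℝ)) u :=
    (Complex.reCLM.hasFDerivAt.comp u (hlog.hasFDerivAt.restrictScalars ℝ)).add_const _
  refine hre.congr_of_eventuallyEq ?_
  have hne : ∀ᶠ w in nhds u, g w ≠ 0 := hgd.continuousAt.eventually_ne hg0
  filter_upwards [hne] with w hw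
  rw [Complex.log_re, norm_div,
    Real.log_div (norm_ne_zero_iff.mpr hw) (norm_ne_zero_iff.mpr hg0)]
  ring

/-- The computation of Proposition 4.6 of the paper: with `L` a branch of `log f`
(so `exp ∘ L = f`), `ω = L · dg/g` and `σ = −π₁(L)·log|g|`, evaluating the 1-forms
on a tangent vector `v` at `u` one has `π₁(ω)(v) + dσ(v) = −r₂(f,g)(v)`, where
`r₂(f,g) = π₁(d log f)·log|g| − log|f|·π₁(d log g)`. -/
theorem stmt10 (f g L : ℂ → ℂ) (u v : ℂ)
    (hL : ∀ w, Complex.exp (L w) = f w)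
    (hf0 : f u ≠ 0) (hg0 : g u ≠ 0)
    (hLd : DifferentiableAt ℂ L u) (hgd : DifferentiableAt ℂ g u)
    (hfd : DifferentiableAt ℂ f u) :
    pi1 (L u * (deriv g u / g u) * v)
      + fderiv ℝ (fun w => -(pi1 (L w)) * (Real.log (‖g w‖) : ℂ)) u v
    = -(pi1 (deriv f u / f u * v) * (Real.log (‖g u‖) : ℂ)
        - (Real.log (‖f u‖) : ℂ) * pi1 (deriv g u / g u * v)) := by
  -- derivative of f in terms of derivative of L
  have hderf : deriv f u = f u * deriv L u := by
    have h1 : HasDerivAt (fun w => Complex.exp (L w)) (Complex.exp (L u) * deriv L u) u :=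
      (Complex.hasDerivAt_exp (L u)).comp u hLd.hasDerivAt
    have h2 : HasDerivAt f (f u * deriv L u) u := by
      simpa [funext hL, hL u] using h1
    exact h2.deriv
  have hdivf : deriv f u / f u = deriv L u := by
    rw [hderf]; field_simp
  have hlogf : (Real.log (‖f u‖) : ℂ) = ((L u).re : ℂ) := by
    rw [← hL u, Complex.norm_exp, Real.log_exp]
  -- derivative of L over ℝ
  set C : ℂ →L[ℝ] ℂ :=
    (ContinuousLinearMap.smulRight (1 : ℂ →L[ℂ] ℂ) (deriv L u)).restrictScalars ℝ with hC
  have hL1 : HasFDerivAt L C u := hLd.hasDerivAt.hasFDerivAt.restrictScalars ℝ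
  have hconj : HasFDerivAt (fun w => (starRingEnd ℂ) (L w))
      (Complex.conjCLE.toContinuousLinearMap.comp C) u :=
    (Complex.conjCLE.toContinuousLinearMap.hasFDerivAt).comp u hL1
  have hA : HasFDerivAt (fun w => -((L w - (starRingEnd ℂ) (L w)) / 2))
      (-((2 : ℂ)⁻¹ • (C - Complex.conjCLE.toContinuousLinearMap.comp C))) u := by
    have := ((hL1.sub hconj).const_smul ((2 : ℂ)⁻¹)).neg
    refine this.congr_of_eventuallyEq (Filter.Eventually.of_forall fun w => ?_)
    simp only [Pi.neg_apply, Pi.smul_apply, Pi.sub_apply, smul_eq_mul]; ring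
  -- derivative of log |g| as a ℂ-valued function
  have hB : HasFDerivAt (fun w => ((Real.log (‖g w‖) : ℝ) : ℂ))
      (Complex.ofRealCLM.comp (Complex.reCLM.comp
        ((ContinuousLinearMap.smulRight (1 : ℂ →L[ℂ] ℂ) (deriv g u / g u)).restrictScalars ℝ))) u :=
    Complex.ofRealCLM.hasFDerivAt.comp u (logAbsHasFDeriv g u hg0 hgd)
  have hφ := hA.mul hB
  have hfun : (fun w => -(pi1 (L w)) * (Real.log (‖g w‖) : ℂ))
      = (fun w => -((L w - (starRingEnd ℂ) (L w)) / 2) * ((Real.log (‖g w‖) : ℝ) : ℂ)) := by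
    funext w; rw [pi1]
  rw [hfun, show (fun w => -((L w - (starRingEnd ℂ) (L w)) / 2) * ((Real.log (‖g w‖) : ℝ) : ℂ)) = (fun w => -((L w - (starRingEnd ℂ) (L w)) / 2)) * (fun w => ((Real.log (‖g w‖) : ℝ) : ℂ)) from rfl, hφ.fderiv]
  simp only [ContinuousLinearMap.add_apply, ContinuousLinearMap.smul_apply,
    ContinuousLinearMap.coe_comp', Function.comp_apply, ContinuousLinearMap.coe_restrictScalars',
    ContinuousLinearMap.smulRight_apply, ContinuousLinearMap.one_apply,
    ContinuousLinearMap.neg_apply, ContinuousLinearMap.sub_apply,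
    ContinuousLinearEquiv.coe_coe, Complex.conjCLE_apply, Complex.reCLM_apply,
    Complex.ofRealCLM_apply, smul_eq_mul, hdivf, hlogf, hC]
  -- now pure algebra with conjugation
  have hre1 : ∀ z : ℂ, ((z.re : ℝ) : ℂ) = (z + (starRingEnd ℂ) z) / 2 := by
    intro z; rw [Complex.add_conj]; push_cast; ring
  rw [pi1, pi1, pi1, hre1, hre1]
  simp only [map_mul, map_sub, map_div₀, Complex.conj_conj, map_ofNat]
  ring
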